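/- (Proposition 6, case a > 0.) Suppose π(θ, e) = π₀(e) − θ·(a e + b) with a > 0, for a twice continuously differentiable, strictly concave π₀ : E → ℝ, with π(θ,0) < π(θ,ē) for all θ ∈ Θ, and the density f is continuously differentiable and strictly positive on the interior of Θ. If there exists θ_▲ ∈ Θ such that e̲(θ) = ē for all θ ∈ [θ̲, θ_▲] and f is nonincreasing on [θ_▲, θ̄], then full disclosure Pareto dominates every other policy: for every admissible policy d, Π(d) ≤ Π(d_id) and Γ(d) ≥ Γ(d_id); consequently, any admissible efficient policy d satisfies Π(d) = Π(d_id) and Γ(d) = Γ(d_id). -/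

import Mathlib

open Set MeasureTheory

noncomputable section

/-- The set of belief-compatible emission levels under disclosure policy `d`,
on the emission space `E = [0, ebar]`. -/
def BCset (ebar : ℝ) (d : ℝ → ℝ) : Set ℝ :=
  {e | e ∈ Icc 0 ebar ∧ ∀ e' ∈ Icc 0 ebar, d e' = d e → e' ≤ e}

/-- `d` is more transparent than `d'`: the fibers of `d` refine those of `d'`. -/
def MoreTransparent (ebar : ℝ) (d d' : ℝ → ℝ) : Prop :=
  ∀ e₁ ∈ Icc (0:ℝ) ebar, ∀ e₂ ∈ Icc (0:ℝ) ebar, d e₁ = d e₂ → d' e₁ = d' e₂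

/-- A policy is admissible if for every type `θ ∈ Θ`, the profit `π θ ·`
attains a maximum on the belief-compatible set. -/
def Admissible (ebar θl θh : ℝ) (π : ℝ → ℝ → ℝ) (d : ℝ → ℝ) : Prop :=
  ∀ θ ∈ Icc θl θh, ∃ e ∈ BCset ebar d, ∀ e' ∈ BCset ebar d, π θ e' ≤ π θ e

/-- The maximized profit `π_d(θ)` of type `θ` under policy `d`. -/
def profitFn (ebar : ℝ) (π : ℝ → ℝ → ℝ) (d : ℝ → ℝ) (θ : ℝ) : ℝ :=
  sSup (π θ '' BCset ebar d)

/-- The equilibrium emission `γ_d(θ)`: the least maximizer of `π θ ·` on the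
belief-compatible set. -/
def emissionFn (ebar : ℝ) (π : ℝ → ℝ → ℝ) (d : ℝ → ℝ) (θ : ℝ) : ℝ :=
  sInf {e | e ∈ BCset ebar d ∧ ∀ e' ∈ BCset ebar d, π θ e' ≤ π θ e}

/-- Expected profit `Π(d) = ∫ π_d(θ) f(θ) dθ`. -/
def ExpProfit (ebar θl θh : ℝ) (π : ℝ → ℝ → ℝ) (f : ℝ → ℝ) (d : ℝ → ℝ) : ℝ :=
  ∫ θ in Icc θl θh, profitFn ebar π d θ * f θ

/-- Expected emission `Γ(d) = ∫ γ_d(θ) f(θ) dθ`. -/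
def ExpEmission (ebar θl θh : ℝ) (π : ℝ → ℝ → ℝ) (f : ℝ → ℝ) (d : ℝ → ℝ) : ℝ :=
  ∫ θ in Icc θl θh, emissionFn ebar π d θ * f θ

/-- `d` is Pareto efficient: no admissible policy yields weakly higher expected
profit and weakly lower expected emission with at least one strict. -/
def Efficient (ebar θl θh : ℝ) (π : ℝ → ℝ → ℝ) (f : ℝ → ℝ) (d : ℝ → ℝ) : Prop :=
  ¬ ∃ d' : ℝ → ℝ, Admissible ebar θl θh π d' ∧
      ExpProfit ebar θl θh π f d ≤ ExpProfit ebar θl θh π f d' ∧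
      ExpEmission ebar θl θh π f d' ≤ ExpEmission ebar θl θh π f d ∧
      (ExpProfit ebar θl θh π f d < ExpProfit ebar θl θh π f d' ∨
        ExpEmission ebar θl θh π f d' < ExpEmission ebar θl θh π f d)

open intervalIntegral Filter Topology

/-- maximizer set -/
def Mset (ebar : ℝ) (π : ℝ → ℝ → ℝ) (d : ℝ → ℝ) (θ : ℝ) : Set ℝ :=
  {e | e ∈ BCset ebar d ∧ ∀ e' ∈ BCset ebar d, π θ e' ≤ π θ e}

lemma emissionFn_eq_sInf_Mset (ebar : ℝ) (π : ℝ → ℝ → ℝ) (d : ℝ → ℝ) (θ : ℝ) :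
    emissionFn ebar π d θ = sInf (Mset ebar π d θ) := rfl

lemma BCset_subset (ebar : ℝ) (d : ℝ → ℝ) : BCset ebar d ⊆ Icc 0 ebar := fun _ h => h.1

lemma ebar_mem_BCset {ebar : ℝ} (h : 0 ≤ ebar) (d : ℝ → ℝ) : ebar ∈ BCset ebar d :=
  ⟨⟨h, le_rfl⟩, fun _ he' _ => he'.2⟩

lemma BCset_id (ebar : ℝ) : BCset ebar (fun e => e) = Icc 0 ebar := by
  ext e; exact ⟨fun h => h.1, fun h => ⟨h, fun e' _ he' => le_of_eq he'⟩⟩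
/-- strict concavity of the profit in e -/
lemma strictConcave_profit {ebar : ℝ} {π0 : ℝ → ℝ} {a b : ℝ} {π : ℝ → ℝ → ℝ}
    (hπ : ∀ θ e, π θ e = π0 e - θ * (a * e + b))
    (hπ0conc : StrictConcaveOn ℝ (Icc 0 ebar) π0) (θ : ℝ) :
    StrictConcaveOn ℝ (Icc 0 ebar) (π θ) := by
  constructor
  · exact convex_Icc _ _
  · intro x hx y hy hxy s t hs ht hst
    have h1 := hπ0conc.2 hx hy hxy hs ht hst
    simp only [smul_eq_mul] at h1 ⊢
    rw [hπ, hπ, hπ]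
    have key : s * (π0 x - θ * (a * x + b)) + t * (π0 y - θ * (a * y + b)) =
        s * π0 x + t * π0 y - θ * (a * (s * x + t * y) + b) := by
      linear_combination (-(θ * b)) * hst
    rw [key]
    linarith

/-- no three distinct maximizers -/
lemma Mset_no_three {ebar : ℝ} {π : ℝ → ℝ → ℝ} {d : ℝ → ℝ} {θ : ℝ}
    (hconc : StrictConcaveOn ℝ (Icc 0 ebar) (π θ))
    {x y z : ℝ} (hx : x ∈ Mset ebar π d θ) (hy : y ∈ Mset ebar π d θ)
    (hz : z ∈ Mset ebar π d θ) (hxy : x < y) (hyz : y < z) : False := by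
  have hvxy : π θ y = π θ x := le_antisymm (hx.2 y hy.1) (hy.2 x hx.1)
  have hvzy : π θ z = π θ y := le_antisymm (hy.2 z hz.1) (hz.2 y hy.1)
  have hzx : 0 < z - x := by linarith
  have hs0 : 0 < (z - y) / (z - x) := div_pos (by linarith) hzx
  have ht0 : 0 < (y - x) / (z - x) := div_pos (by linarith) hzx
  have hst : (z - y) / (z - x) + (y - x) / (z - x) = 1 := by field_simp; ring
  have hcomb : ((z - y) / (z - x)) • x + ((y - x) / (z - x)) • z = y := by
    simp only [smul_eq_mul]; field_simp; ring
  have h3 := hconc.2 hx.1.1 hz.1.1 (ne_of_lt (lt_trans hxy hyz)) hs0 ht0 hst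
  rw [hcomb] at h3
  simp only [smul_eq_mul] at h3
  rw [hvzy, ← hvxy] at h3
  have h2 : (z - y) / (z - x) * π θ y + (y - x) / (z - x) * π θ y = π θ y := by
    linear_combination (π θ y) * hst
  linarith

/-- the least maximizer exists -/
lemma isLeast_Mset {ebar θl θh θ : ℝ} {π : ℝ → ℝ → ℝ} {d : ℝ → ℝ}
    (hconc : StrictConcaveOn ℝ (Icc 0 ebar) (π θ))
    (hadm : Admissible ebar θl θh π d) (hθ : θ ∈ Icc θl θh) :
    IsLeast (Mset ebar π d θ) (emissionFn ebar π d θ) := by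
  obtain ⟨e0, he0, hmax⟩ := hadm θ hθ
  have he0M : e0 ∈ Mset ebar π d θ := ⟨he0, hmax⟩
  by_cases hlb : ∀ e ∈ Mset ebar π d θ, e0 ≤ e
  · have : IsLeast (Mset ebar π d θ) e0 := ⟨he0M, hlb⟩
    rw [emissionFn_eq_sInf_Mset, this.csInf_eq]
    exact this
  · push_neg at hlb
    obtain ⟨e1, he1M, he1lt⟩ := hlb
    have : IsLeast (Mset ebar π d θ) e1 := by
      refine ⟨he1M, fun e heM => ?_⟩
      by_contra hlt
      push_neg at hlt
      exact Mset_no_three hconc heM he1M he0M hlt he1lt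
    rw [emissionFn_eq_sInf_Mset, this.csInf_eq]
    exact this
lemma emissionFn_mem {ebar θl θh θ : ℝ} {π : ℝ → ℝ → ℝ} {d : ℝ → ℝ}
    (hconc : StrictConcaveOn ℝ (Icc 0 ebar) (π θ))
    (hadm : Admissible ebar θl θh π d) (hθ : θ ∈ Icc θl θh) :
    emissionFn ebar π d θ ∈ Mset ebar π d θ := (isLeast_Mset hconc hadm hθ).1

/-- profitFn equals the value at the least maximizer -/
lemma isGreatest_profitFn {ebar θl θh θ : ℝ} {π : ℝ → ℝ → ℝ} {d : ℝ → ℝ}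
    (hconc : StrictConcaveOn ℝ (Icc 0 ebar) (π θ))
    (hadm : Admissible ebar θl θh π d) (hθ : θ ∈ Icc θl θh) :
    IsGreatest (π θ '' BCset ebar d) (profitFn ebar π d θ) := by
  obtain ⟨hmem, hmax⟩ := emissionFn_mem hconc hadm hθ
  have hg : IsGreatest (π θ '' BCset ebar d) (π θ (emissionFn ebar π d θ)) :=
    ⟨mem_image_of_mem _ hmem, by rintro v ⟨e, he, rfl⟩; exact hmax e he⟩
  rw [show profitFn ebar π d θ = π θ (emissionFn ebar π d θ) from hg.csSup_eq]
  exact hg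

lemma profitFn_eq {ebar θl θh θ : ℝ} {π : ℝ → ℝ → ℝ} {d : ℝ → ℝ}
    (hconc : StrictConcaveOn ℝ (Icc 0 ebar) (π θ))
    (hadm : Admissible ebar θl θh π d) (hθ : θ ∈ Icc θl θh) :
    profitFn ebar π d θ = π θ (emissionFn ebar π d θ) := by
  obtain ⟨hmem, hmax⟩ := emissionFn_mem hconc hadm hθ
  have hg : IsGreatest (π θ '' BCset ebar d) (π θ (emissionFn ebar π d θ)) :=
    ⟨mem_image_of_mem _ hmem, by rintro v ⟨e, he, rfl⟩; exact hmax e he⟩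
  exact hg.csSup_eq
lemma continuousOn_profit {ebar : ℝ} {π0 : ℝ → ℝ} {a b : ℝ} {π : ℝ → ℝ → ℝ}
    (hπ : ∀ θ e, π θ e = π0 e - θ * (a * e + b))
    (hπ0C : ContinuousOn π0 (Icc 0 ebar)) (θ : ℝ) :
    ContinuousOn (π θ) (Icc 0 ebar) := by
  have : π θ = fun e => π0 e - θ * (a * e + b) := by funext e; exact hπ θ e
  rw [this]
  exact hπ0C.sub (Continuous.continuousOn (by continuity))

lemma admissible_id {ebar θl θh : ℝ} (hebar : 0 ≤ ebar) {π0 : ℝ → ℝ} {a b : ℝ}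
    {π : ℝ → ℝ → ℝ} (hπ : ∀ θ e, π θ e = π0 e - θ * (a * e + b))
    (hπ0C : ContinuousOn π0 (Icc 0 ebar)) :
    Admissible ebar θl θh π (fun e => e) := by
  intro θ hθ
  obtain ⟨e, he, hmax⟩ := (isCompact_Icc (a := (0:ℝ)) (b := ebar)).exists_isMaxOn
    (nonempty_Icc.2 hebar) (continuousOn_profit hπ hπ0C θ)
  exact ⟨e, by rw [BCset_id]; exact he, fun e' he' => hmax (by rw [BCset_id] at he'; exact he')⟩

/-- pointwise profit dominance of full disclosure -/
lemma profitFn_le_id {ebar θl θh θ : ℝ} {π0 : ℝ → ℝ} {a b : ℝ} {π : ℝ → ℝ → ℝ}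
    (hπ : ∀ θ e, π θ e = π0 e - θ * (a * e + b))
    (hπ0C : ContinuousOn π0 (Icc 0 ebar))
    (hconc : StrictConcaveOn ℝ (Icc 0 ebar) (π θ)) {d : ℝ → ℝ}
    (hadm : Admissible ebar θl θh π d) (hθ : θ ∈ Icc θl θh) :
    profitFn ebar π d θ ≤ profitFn ebar π (fun e => e) θ := by
  have hbdd : BddAbove (π θ '' Icc 0 ebar) :=
    (isCompact_Icc.image_of_continuousOn (continuousOn_profit hπ hπ0C θ)).bddAbove
  have hne : (π θ '' BCset ebar d).Nonempty :=
    ⟨_, mem_image_of_mem _ (emissionFn_mem hconc hadm hθ).1⟩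
  have hsub : π θ '' BCset ebar d ⊆ π θ '' Icc 0 ebar :=
    image_mono (BCset_subset ebar d)
  calc profitFn ebar π d θ = sSup (π θ '' BCset ebar d) := rfl
    _ ≤ sSup (π θ '' Icc 0 ebar) := csSup_le_csSup hbdd hne hsub
    _ = profitFn ebar π (fun e => e) θ := by rw [profitFn, BCset_id]

/-- the least maximizer is antitone in θ -/
lemma emissionFn_antitone {ebar θl θh : ℝ} {π0 : ℝ → ℝ} {a b : ℝ} (ha : 0 < a)
    {π : ℝ → ℝ → ℝ} (hπ : ∀ θ e, π θ e = π0 e - θ * (a * e + b))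
    (hπ0conc : StrictConcaveOn ℝ (Icc 0 ebar) π0) {d : ℝ → ℝ}
    (hadm : Admissible ebar θl θh π d) :
    AntitoneOn (emissionFn ebar π d) (Icc θl θh) := by
  intro θ1 hθ1 θ2 hθ2 h12
  rcases eq_or_lt_of_le h12 with rfl | hlt
  · exact le_rfl
  set e1 := emissionFn ebar π d θ1
  set e2 := emissionFn ebar π d θ2
  have h1 := emissionFn_mem (strictConcave_profit hπ hπ0conc θ1) hadm hθ1
  have h2 := emissionFn_mem (strictConcave_profit hπ hπ0conc θ2) hadm hθ2
  have i1 : π θ1 e2 ≤ π θ1 e1 := h1.2 e2 h2.1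
  have i2 : π θ2 e1 ≤ π θ2 e2 := h2.2 e1 h1.1
  rw [hπ, hπ] at i1 i2
  by_contra hcon
  push_neg at hcon
  nlinarith [i1, i2, mul_pos (sub_pos.2 hlt) (sub_pos.2 hcon), ha]
/-- On the irresponsive region, `ebar` is the unique maximizer on any BCset. -/
lemma emissionFn_eq_ebar {ebar θ : ℝ} (hebar : 0 ≤ ebar) {π : ℝ → ℝ → ℝ}
    {d : ℝ → ℝ}
    (hstrict : ∀ e ∈ Icc 0 ebar, π θ ebar ≤ π θ e → ebar ≤ e) :
    emissionFn ebar π d θ = ebar ∧ profitFn ebar π d θ = π θ ebar := by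
  have hbc := ebar_mem_BCset hebar d
  have hmax : ∀ e' ∈ BCset ebar d, π θ e' ≤ π θ ebar := by
    intro e' he'
    by_contra hcon
    push_neg at hcon
    have h1 : ebar ≤ e' := hstrict e' he'.1 hcon.le
    have h2 : e' ≤ ebar := he'.1.2
    rw [le_antisymm h2 h1] at hcon
    exact lt_irrefl _ hcon
  have hM : Mset ebar π d θ = {ebar} := by
    apply Subset.antisymm
    · intro e he
      have h1 : π θ ebar ≤ π θ e := he.2 ebar hbc
      have h2 : ebar ≤ e := hstrict e he.1.1 h1
      exact le_antisymm he.1.1.2 h2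
    · intro e he; rw [mem_singleton_iff] at he; subst he; exact ⟨hbc, hmax⟩
  constructor
  · rw [emissionFn_eq_sInf_Mset, hM, csInf_singleton]
  · have hg : IsGreatest (π θ '' BCset ebar d) (π θ ebar) :=
      ⟨mem_image_of_mem _ hbc, by rintro v ⟨e, he, rfl⟩; exact hmax e he⟩
    exact hg.csSup_eq

/-- subgradient inequality for the value function -/
lemma profitFn_subgradient {ebar θl θh θ θ' : ℝ} {π0 : ℝ → ℝ} {a b : ℝ}
    {π : ℝ → ℝ → ℝ} (hπ : ∀ θ e, π θ e = π0 e - θ * (a * e + b))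
    (hπ0conc : StrictConcaveOn ℝ (Icc 0 ebar) π0) {d : ℝ → ℝ}
    (hadm : Admissible ebar θl θh π d) (hθ : θ ∈ Icc θl θh) (hθ' : θ' ∈ Icc θl θh) :
    profitFn ebar π d θ - (θ' - θ) * (a * emissionFn ebar π d θ + b)
      ≤ profitFn ebar π d θ' := by
  have h1 := emissionFn_mem (strictConcave_profit hπ hπ0conc θ) hadm hθ
  have hg' := isGreatest_profitFn (strictConcave_profit hπ hπ0conc θ') hadm hθ'
  have h2 : π θ' (emissionFn ebar π d θ) ≤ profitFn ebar π d θ' :=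
    hg'.2 (mem_image_of_mem _ h1.1)
  have h3 : profitFn ebar π d θ = π θ (emissionFn ebar π d θ) :=
    profitFn_eq (strictConcave_profit hπ hπ0conc θ) hadm hθ
  rw [hπ] at h2
  rw [h3, hπ]
  linarith
/-- FTC via monotone squeeze: if `F` has `G`-subgradient bounds on all subintervals
and `G` is monotone, then `F y - F x = ∫ G`. -/
lemma ftc_squeeze {F G : ℝ → ℝ} {x y : ℝ} (hxy : x ≤ y)
    (hmono : MonotoneOn G (Icc x y))
    (hlow : ∀ u v, x ≤ u → u ≤ v → v ≤ y → (v - u) * G u ≤ F v - F u)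
    (hupp : ∀ u v, x ≤ u → u ≤ v → v ≤ y → F v - F u ≤ (v - u) * G v) :
    F y - F x = ∫ t in x..y, G t := by
  rcases eq_or_lt_of_le hxy with rfl | hlt
  · simp
  have hyx : 0 < y - x := by linarith
  set c : ℝ := (y - x) * (G y - G x) with hc
  have hGxy : G x ≤ G y := hmono ⟨le_rfl, hxy⟩ ⟨hxy, le_rfl⟩ hxy
  have hc0 : 0 ≤ c := mul_nonneg (by linarith) (by linarith)
  have key : ∀ n : ℕ, |F y - F x - ∫ t in x..y, G t| ≤ c / (n + 1) := by
    intro n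
    set N : ℕ := n + 1 with hN
    have hNpos : (0:ℝ) < N := by positivity
    set δ : ℝ := (y - x) / N with hδ
    have hδ0 : 0 < δ := div_pos hyx hNpos
    set t : ℕ → ℝ := fun i => x + i * δ with htdef
    have ht0 : t 0 = x := by simp [htdef]
    have htN : t N = y := by
      simp only [htdef, hδ]
      field_simp; ring
    have htstep : ∀ i, t (i + 1) - t i = δ := by
      intro i; simp only [htdef]; push_cast; ring
    have htmono : ∀ i j : ℕ, i ≤ j → t i ≤ t j := by
      intro i j hij
      simp only [htdef]
      have : (i:ℝ) ≤ j := Nat.cast_le.2 hij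
      nlinarith
    have htmem : ∀ i : ℕ, i ≤ N → t i ∈ Icc x y := by
      intro i hi
      constructor
      · rw [← ht0]; exact htmono 0 i (Nat.zero_le _)
      · rw [← htN]; exact htmono i N hi
    have hintk : ∀ k : ℕ, k < N → IntervalIntegrable G volume (t k) (t (k+1)) := by
      intro k hk
      apply MonotoneOn.intervalIntegrable
      have : uIcc (t k) (t (k+1)) = Icc (t k) (t (k+1)) :=
        uIcc_of_le (htmono k (k+1) (Nat.le_succ _))
      rw [this]
      exact hmono.mono (Icc_subset_Icc (htmem k hk.le).1 (htmem (k+1) hk).2)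
    have hA : F y - F x = ∑ i ∈ Finset.range N, (F (t (i+1)) - F (t i)) := by
      rw [Finset.sum_range_sub (fun i => F (t i))]
      rw [ht0, htN]
    have hB : (∫ s in x..y, G s) = ∑ i ∈ Finset.range N, ∫ s in (t i)..(t (i+1)), G s := by
      rw [intervalIntegral.sum_integral_adjacent_intervals hintk, ht0, htN]
    have hper : ∀ i ∈ Finset.range N,
        |(F (t (i+1)) - F (t i)) - ∫ s in (t i)..(t (i+1)), G s|
          ≤ δ * G (t (i+1)) - δ * G (t i) := by
      intro i hi
      rw [Finset.mem_range] at hi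
      have hmem1 := htmem i hi.le
      have hmem2 := htmem (i+1) hi
      have hle : t i ≤ t (i+1) := htmono i (i+1) (Nat.le_succ _)
      have hFl := hlow (t i) (t (i+1)) hmem1.1 hle hmem2.2
      have hFu := hupp (t i) (t (i+1)) hmem1.1 hle hmem2.2
      rw [htstep i] at hFl hFu
      have hsub : Icc (t i) (t (i+1)) ⊆ Icc x y := Icc_subset_Icc hmem1.1 hmem2.2
      have hIl : δ * G (t i) ≤ ∫ s in (t i)..(t (i+1)), G s := by
        have := intervalIntegral.integral_mono_on hle
          (_root_.intervalIntegrable_const (c := G (t i))) (hintk i hi)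
          (fun s hs => hmono hmem1 (hsub hs) hs.1)
        rw [intervalIntegral.integral_const, htstep i, smul_eq_mul] at this
        linarith
      have hIu : (∫ s in (t i)..(t (i+1)), G s) ≤ δ * G (t (i+1)) := by
        have := intervalIntegral.integral_mono_on hle (hintk i hi)
          (_root_.intervalIntegrable_const (c := G (t (i+1))))
          (fun s hs => hmono (hsub hs) hmem2 hs.2)
        rw [intervalIntegral.integral_const, htstep i, smul_eq_mul] at this
        linarith
      rw [abs_le]
      constructor <;> linarith
    calc |F y - F x - ∫ s in x..y, G s|
        = |∑ i ∈ Finset.range N, ((F (t (i+1)) - F (t i)) - ∫ s in (t i)..(t (i+1)), G s)| := by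
          rw [Finset.sum_sub_distrib, ← hA, ← hB]
      _ ≤ ∑ i ∈ Finset.range N, |(F (t (i+1)) - F (t i)) - ∫ s in (t i)..(t (i+1)), G s| :=
          Finset.abs_sum_le_sum_abs _ _
      _ ≤ ∑ i ∈ Finset.range N, (δ * G (t (i+1)) - δ * G (t i)) := Finset.sum_le_sum hper
      _ = δ * G (t N) - δ * G (t 0) := Finset.sum_range_sub (fun i => δ * G (t i)) N
      _ = c / N := by rw [ht0, htN, hδ, hc]; field_simp
      _ = c / (n + 1) := by norm_num [hN]
  by_contra hne
  have habs : 0 < |F y - F x - ∫ s in x..y, G s| := by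
    rw [abs_pos]
    intro h0
    exact hne (by linarith [sub_eq_zero.1 h0])
  obtain ⟨n, hn⟩ := exists_nat_gt (c / |F y - F x - ∫ s in x..y, G s|)
  have h1 := key n
  have h2 : c / ((n:ℝ) + 1) < |F y - F x - ∫ s in x..y, G s| := by
    rw [div_lt_iff₀ (by positivity)]
    have : c / |F y - F x - ∫ s in x..y, G s| < (n:ℝ) + 1 := by linarith
    rw [div_lt_iff₀ habs] at this
    linarith
  linarith

lemma hasDerivWithinAt_primitive_rightLim {g : ℝ → ℝ} (hg : Antitone g) (x0 t : ℝ) :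
    HasDerivWithinAt (fun s => ∫ u in x0..s, g u) (Function.rightLim g t) (Ioi t) t := by
  rw [hasDerivWithinAt_iff_tendsto_slope]
  have hIoi : Ioi t \ {t} = Ioi t := by simp
  rw [hIoi]
  have hub : ∀ s ∈ Ioi t, slope (fun s => ∫ u in x0..s, g u) t s ≤ Function.rightLim g t := by
    intro s hs
    rw [mem_Ioi] at hs
    have hst : 0 < s - t := by linarith
    rw [slope_def_field, div_le_iff₀ hst] at *
    rw [integral_interval_sub_left ((hg.intervalIntegrable (a:=x0) (b:=s))) ((hg.intervalIntegrable (a:=x0) (b:=t)))]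
    have : (∫ u in t..s, g u) ≤ ∫ u in t..s, Function.rightLim g t := by
      rw [intervalIntegral.integral_of_le hs.le, intervalIntegral.integral_of_le hs.le]
      apply setIntegral_mono_on
      · exact ((hg.intervalIntegrable (a:=t) (b:=s))).1.mono_set (by simp [uIoc_of_le hs.le])
      · exact integrableOn_const (by simp)
      · exact measurableSet_Ioc
      · exact fun u hu => hg.le_rightLim hu.1
    rw [intervalIntegral.integral_const, smul_eq_mul] at this
    linarith
  have hlb : ∀ s ∈ Ioi t, g s ≤ slope (fun s => ∫ u in x0..s, g u) t s := by
    intro s hs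
    rw [mem_Ioi] at hs
    have hst : 0 < s - t := by linarith
    rw [slope_def_field, le_div_iff₀ hst]
    rw [integral_interval_sub_left ((hg.intervalIntegrable (a:=x0) (b:=s))) ((hg.intervalIntegrable (a:=x0) (b:=t)))]
    have : (∫ u in t..s, g s) ≤ ∫ u in t..s, g u := by
      rw [intervalIntegral.integral_of_le hs.le, intervalIntegral.integral_of_le hs.le]
      apply setIntegral_mono_on
      · exact integrableOn_const (by simp)
      · exact ((hg.intervalIntegrable (a:=t) (b:=s))).1.mono_set (by simp [uIoc_of_le hs.le])
      · exact measurableSet_Ioc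
      · exact fun u hu => hg hu.2
    rw [intervalIntegral.integral_const, smul_eq_mul] at this
    linarith
  refine tendsto_of_tendsto_of_tendsto_of_le_of_le' (hg.tendsto_rightLim t) tendsto_const_nhds
    ?_ ?_
  · filter_upwards [self_mem_nhdsWithin] with s hs using hlb s hs
  · filter_upwards [self_mem_nhdsWithin] with s hs using hub s hs

lemma rightLim_ae_eq {g : ℝ → ℝ} (hg : Antitone g) :
    ∀ᵐ t : ℝ, Function.rightLim g t = g t := by
  have hsub : {t : ℝ | ¬ Function.rightLim g t = g t} ⊆ {t | ¬ ContinuousAt g t} := by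
    intro t ht hc
    exact ht (hg.continuousWithinAt_Ioi_iff_rightLim_eq.1 hc.continuousWithinAt)
  have : volume {t : ℝ | ¬ Function.rightLim g t = g t} = 0 :=
    measure_mono_null hsub (hg.countable_not_continuousAt.measure_zero _)
  exact this

lemma deriv_nonpos_of_antitoneOn {f : ℝ → ℝ} {α β t : ℝ} (hd : HasDerivAt f (deriv f t) t)
    (hmono : AntitoneOn f (Icc α β)) (ht : t ∈ Ico α β) :
    deriv f t ≤ 0 := by
  have hslope : ∀ s ∈ Ioo t β, slope f t s ≤ 0 := by
    intro s hs
    rw [slope_def_field]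
    apply div_nonpos_of_nonpos_of_nonneg
    · have : f s ≤ f t := hmono ⟨ht.1, (ht.2).le⟩ ⟨ht.1.trans hs.1.le, hs.2.le⟩ hs.1.le
      linarith
    · linarith [hs.1]
  have htd : Tendsto (slope f t) (nhdsWithin t (Ioi t)) (nhds (deriv f t)) := by
    have h1 := hd.hasDerivWithinAt (s := Ioi t)
    rw [hasDerivWithinAt_iff_tendsto_slope] at h1
    simpa using h1
  refine le_of_tendsto htd ?_
  filter_upwards [Ioo_mem_nhdsGT_of_mem ⟨le_rfl, ht.2⟩] with s hs using hslope s hs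
lemma ibp_key {gd gi f : ℝ → ℝ} {θl θb θh u v : ℝ}
    (hgd : Antitone gd) (hgi : Antitone gi)
    (hθlθb : θl ≤ θb) (hθbu : θb < u) (huv : u ≤ v) (hvθh : v < θh)
    (hH0 : ∀ t ∈ Icc θb θh, 0 ≤ (∫ s in θb..t, gd s) - ∫ s in θb..t, gi s)
    (hfC1 : ContDiffOn ℝ 1 f (Ioo θl θh))
    (hfmono : AntitoneOn f (Icc θb θh))
    (hf0 : ∀ θ ∈ Icc θl θh, 0 ≤ f θ)
    (hGint : IntegrableOn (fun t => (gd t - gi t) * f t) (Icc θl θh)) :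
    -(((∫ s in θb..u, gd s) - ∫ s in θb..u, gi s) * f u)
      ≤ ∫ t in u..v, (gd t - gi t) * f t := by
  set H : ℝ → ℝ := fun t => (∫ s in θb..t, gd s) - ∫ s in θb..t, gi s with hHdef
  have hIccIoo : Icc u v ⊆ Ioo θl θh :=
    fun t ht => ⟨lt_of_le_of_lt hθlθb (lt_of_lt_of_le hθbu ht.1), lt_of_le_of_lt ht.2 hvθh⟩
  have hIccIccbh : Icc u v ⊆ Icc θb θh :=
    fun t ht => ⟨le_of_lt (lt_of_lt_of_le hθbu ht.1), le_of_lt (lt_of_le_of_lt ht.2 hvθh)⟩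
  have hIccIcclh : Icc u v ⊆ Icc θl θh :=
    fun t ht => ⟨le_of_lt ((hIccIoo ht).1), le_of_lt ((hIccIoo ht).2)⟩
  -- differentiability of f
  have hfd : ∀ t ∈ Icc u v, HasDerivAt f (deriv f t) t := by
    intro t ht
    have h1 : DifferentiableOn ℝ f (Ioo θl θh) := hfC1.differentiableOn (by norm_num)
    exact (h1.differentiableAt (isOpen_Ioo.mem_nhds (hIccIoo ht))).hasDerivAt
  -- continuity of pieces
  have hcontf : ContinuousOn f (Icc u v) :=
    (hfC1.continuousOn).mono hIccIoo
  have hcontH : Continuous H := by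
    apply Continuous.sub
    · exact intervalIntegral.continuous_primitive
        (fun α β => hgd.intervalIntegrable (a := α) (b := β)) θb
    · exact intervalIntegral.continuous_primitive
        (fun α β => hgi.intervalIntegrable (a := α) (b := β)) θb
  have hcontf' : ContinuousOn (deriv f) (Icc u v) :=
    (hfC1.continuousOn_deriv_of_isOpen isOpen_Ioo le_rfl).mono hIccIoo
  -- the product and its right derivative
  set P : ℝ → ℝ := fun t => H t * f t with hPdef
  set P' : ℝ → ℝ := fun t =>
    (Function.rightLim gd t - Function.rightLim gi t) * f t + H t * deriv f t with hP'def
  have hPderiv : ∀ t ∈ Ioo u v, HasDerivWithinAt P (P' t) (Ioi t) t := by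
    intro t ht
    have h1 := (hasDerivWithinAt_primitive_rightLim hgd θb t).sub
      (hasDerivWithinAt_primitive_rightLim hgi θb t)
    have h2 := ((hfd t (Ioo_subset_Icc_self ht)).hasDerivWithinAt (s := Ioi t))
    exact h1.mul h2
  have hcontP : ContinuousOn P (Icc u v) := (hcontH.continuousOn).mul hcontf
  -- integrability
  have haeq : ∀ᵐ t : ℝ, (Function.rightLim gd t - Function.rightLim gi t) * f t
      = (gd t - gi t) * f t := by
    filter_upwards [rightLim_ae_eq hgd, rightLim_ae_eq hgi] with t h1 h2
    rw [h1, h2]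
  have hint0 : IntervalIntegrable (fun t => (gd t - gi t) * f t) volume u v := by
    rw [intervalIntegrable_iff_integrableOn_Icc_of_le huv]
    exact hGint.mono_set hIccIcclh
  have hint1 : IntervalIntegrable
      (fun t => (Function.rightLim gd t - Function.rightLim gi t) * f t) volume u v := by
    exact hint0.congr_ae (Filter.EventuallyEq.symm (ae_restrict_of_ae haeq))
  have hint2 : IntervalIntegrable (fun t => H t * deriv f t) volume u v :=
    ((hcontH.continuousOn).mul hcontf').intervalIntegrable_of_Icc huv
  -- FTC
  have hftc : (∫ t in u..v, P' t) = P v - P u :=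
    intervalIntegral.integral_eq_sub_of_hasDeriv_right_of_le huv hcontP hPderiv
      (hint1.add hint2)
  have hsplit : (∫ t in u..v, P' t)
      = (∫ t in u..v, (Function.rightLim gd t - Function.rightLim gi t) * f t)
        + ∫ t in u..v, H t * deriv f t :=
    intervalIntegral.integral_add hint1 hint2
  have hcongr : (∫ t in u..v, (Function.rightLim gd t - Function.rightLim gi t) * f t)
      = ∫ t in u..v, (gd t - gi t) * f t := by
    apply intervalIntegral.integral_congr_ae
    filter_upwards [haeq] with t h1 _ using h1
  have hnonpos : (∫ t in u..v, H t * deriv f t) ≤ 0 := by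
    rw [← neg_nonneg, ← intervalIntegral.integral_neg]
    apply intervalIntegral.integral_nonneg huv
    intro t ht
    have h1 : 0 ≤ H t := hH0 t (hIccIccbh ht)
    have h2 : deriv f t ≤ 0 := by
      apply deriv_nonpos_of_antitoneOn (hfd t ht) hfmono
      exact ⟨(hIccIccbh ht).1, lt_of_le_of_lt ht.2 hvθh⟩
    simpa using mul_nonneg h1 (neg_nonneg.2 h2)
  have hPv : 0 ≤ P v := by
    apply mul_nonneg (hH0 v ⟨le_of_lt (lt_of_lt_of_le hθbu huv), le_of_lt hvθh⟩)
    exact hf0 v (hIccIcclh ⟨huv, le_rfl⟩)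
  have hPu : P u = H u * f u := rfl
  have : (∫ t in u..v, (gd t - gi t) * f t) = P v - P u - ∫ t in u..v, H t * deriv f t := by
    rw [← hcongr]; linarith [hftc, hsplit]
  have hHu : ((∫ s in θb..u, gd s) - ∫ s in θb..u, gi s) = H u := rfl
  rw [this, hPu, hHu]
  linarith

/-- antitone extension of a function antitone on `Icc θl θh` -/
def antiExt (θl θh : ℝ) (g : ℝ → ℝ) : ℝ → ℝ := fun t => g (max θl (min t θh))

lemma antiExt_eqOn {θl θh : ℝ} (g : ℝ → ℝ) {t : ℝ} (ht : t ∈ Icc θl θh) :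
    antiExt θl θh g t = g t := by
  rw [antiExt, min_eq_left ht.2, max_eq_right ht.1]

lemma antiExt_antitone {θl θh : ℝ} {g : ℝ → ℝ} (hθ : θl ≤ θh)
    (h : AntitoneOn g (Icc θl θh)) : Antitone (antiExt θl θh g) := by
  intro s t hst
  have hmem : ∀ r : ℝ, max θl (min r θh) ∈ Icc θl θh :=
    fun r => ⟨le_max_left _ _, max_le hθ (min_le_right _ _)⟩
  exact h (hmem s) (hmem t) (max_le_max le_rfl (min_le_min_right _ hst))

lemma primitive_eq {θl θh θb t : ℝ} (hθlb : θl ≤ θb) (hθbh : θb ≤ θh)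
    (ht : t ∈ Icc θb θh) {F g : ℝ → ℝ} {a b : ℝ} (ha : 0 < a)
    (hganti : Antitone g)
    (hsub : ∀ x y, x ∈ Icc θl θh → y ∈ Icc θl θh → F x - (y - x) * (a * g x + b) ≤ F y) :
    F t - F θb = -(a * (∫ s in θb..t, g s) + b * (t - θb)) := by
  have hmemΘ : ∀ s, θb ≤ s → s ≤ t → s ∈ Icc θl θh :=
    fun s h1 h2 => ⟨hθlb.trans h1, h2.trans ht.2⟩
  have key : F t - F θb = ∫ s in θb..t, -(a * g s + b) := by
    apply ftc_squeeze ht.1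
    · intro s hs r hr hsr
      simp only
      nlinarith [mul_le_mul_of_nonneg_left (hganti hsr) ha.le]
    · intro x y hx hxy hy
      have h := hsub x y (hmemΘ x hx (hxy.trans hy)) (hmemΘ y (hx.trans hxy) hy)
      linarith
    · intro x y hx hxy hy
      have h := hsub y x (hmemΘ y (hx.trans hxy) hy) (hmemΘ x hx (hxy.trans hy))
      linarith
  rw [key]
  have h1 : IntervalIntegrable (fun s => a * g s) volume θb t :=
    (hganti.intervalIntegrable (a := θb) (b := t)).const_mul a
  have h2 : IntervalIntegrable (fun s : ℝ => b) volume θb t := intervalIntegrable_const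
  rw [intervalIntegral.integral_neg, intervalIntegral.integral_add h1 h2,
    intervalIntegral.integral_const_mul, intervalIntegral.integral_const, smul_eq_mul]
  ring

/-- Proposition 6, case `a > 0`: if the low types are irresponsive
(`e̲ = ē` on `[θ̲, θ_▲]`) and `f` is nonincreasing on `[θ_▲, θ̄]`, then full disclosure
Pareto dominates every admissible policy. -/
theorem full_disclosure_only_efficient_pos (ebar θl θh : ℝ) (hebar : 0 < ebar)
    (hθ : θl ≤ θh)
    (π0 : ℝ → ℝ) (a b : ℝ) (ha : 0 < a) (π : ℝ → ℝ → ℝ)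
    (hπ : ∀ θ e, π θ e = π0 e - θ * (a * e + b))
    (hπ0C2 : ContDiffOn ℝ 2 π0 (Icc 0 ebar))
    (hπ0conc : StrictConcaveOn ℝ (Icc 0 ebar) π0)
    (hIR : ∀ θ ∈ Icc θl θh, π θ 0 < π θ ebar)
    (f : ℝ → ℝ)
    (hfC1 : ContDiffOn ℝ 1 f (Ioo θl θh))
    (hfpos : ∀ θ ∈ Ioo θl θh, 0 < f θ)
    (hf0 : ∀ θ ∈ Icc θl θh, 0 ≤ f θ)
    (hf1 : (∫ θ in Icc θl θh, f θ) = 1)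
    (hint : ∀ d : ℝ → ℝ, Admissible ebar θl θh π d →
        IntegrableOn (fun θ => profitFn ebar π d θ * f θ) (Icc θl θh) ∧
        IntegrableOn (fun θ => emissionFn ebar π d θ * f θ) (Icc θl θh))
    (elow : ℝ → ℝ)
    (helow : ∀ θ ∈ Icc θl θh,
        IsLeast {e ∈ Icc (0:ℝ) ebar | π θ ebar ≤ π θ e} (elow θ))
    (θblack : ℝ) (hθblack : θblack ∈ Icc θl θh)
    (hirr : ∀ θ ∈ Icc θl θblack, elow θ = ebar)
    (hmono : AntitoneOn f (Icc θblack θh)) :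
    (∀ d : ℝ → ℝ, Admissible ebar θl θh π d →
        ExpProfit ebar θl θh π f d ≤ ExpProfit ebar θl θh π f (fun e => e) ∧
          ExpEmission ebar θl θh π f (fun e => e) ≤ ExpEmission ebar θl θh π f d) ∧
      ∀ d : ℝ → ℝ, Admissible ebar θl θh π d → Efficient ebar θl θh π f d →
        ExpProfit ebar θl θh π f d = ExpProfit ebar θl θh π f (fun e => e) ∧
          ExpEmission ebar θl θh π f d = ExpEmission ebar θl θh π f (fun e => e) := by
  have hECont : ContinuousOn π0 (Icc 0 ebar) := hπ0C2.continuousOn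
  have hconc : ∀ θ : ℝ, StrictConcaveOn ℝ (Icc 0 ebar) (π θ) :=
    strictConcave_profit hπ hπ0conc
  have hadm_id : Admissible ebar θl θh π (fun e => e) := admissible_id hebar.le hπ hECont
  have hstrict : ∀ θ ∈ Icc θl θblack, ∀ e ∈ Icc 0 ebar, π θ ebar ≤ π θ e → ebar ≤ e := by
    intro θ hθ e he hpe
    have hθΘ : θ ∈ Icc θl θh := ⟨hθ.1, hθ.2.trans hθblack.2⟩
    have h := helow θ hθΘ
    rw [hirr θ hθ] at h
    exact h.2 ⟨he, hpe⟩
  have main : ∀ d : ℝ → ℝ, Admissible ebar θl θh π d →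
      ExpProfit ebar θl θh π f d ≤ ExpProfit ebar θl θh π f (fun e => e) ∧
        ExpEmission ebar θl θh π f (fun e => e) ≤ ExpEmission ebar θl θh π f d := by
    intro d hadm
    constructor
    · -- profit comparison (pointwise)
      apply setIntegral_mono_on (hint d hadm).1 (hint _ hadm_id).1 measurableSet_Icc
      intro θ hθmem
      exact mul_le_mul_of_nonneg_right
        (profitFn_le_id hπ hECont (hconc θ) hadm hθmem) (hf0 θ hθmem)
    · -- emission comparison
      set gd := emissionFn ebar π d with hgddef
      set gi := emissionFn ebar π (fun e => e) with hgidef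
      have hWd : IntegrableOn (fun θ => gd θ * f θ) (Icc θl θh) := (hint d hadm).2
      have hWi : IntegrableOn (fun θ => gi θ * f θ) (Icc θl θh) := (hint _ hadm_id).2
      rw [ExpEmission, ExpEmission, ← sub_nonneg, ← integral_sub hWd hWi]
      set W : ℝ → ℝ := fun θ => gd θ * f θ - gi θ * f θ with hWdef
      have hWint : IntegrableOn W (Icc θl θh) := hWd.sub hWi
      -- emission = ebar on the irresponsive region, for any admissible policy
      have hebar_d : ∀ θ ∈ Icc θl θblack, gd θ = ebar :=
        fun θ hθ => (emissionFn_eq_ebar hebar.le (hstrict θ hθ)).1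
      have hebar_i : ∀ θ ∈ Icc θl θblack, gi θ = ebar :=
        fun θ hθ => (emissionFn_eq_ebar hebar.le (hstrict θ hθ)).1
      have hzero : EqOn W (fun _ => (0:ℝ)) (Icc θl θblack) := by
        intro θ hθ
        simp only [hWdef, hebar_d θ hθ, hebar_i θ hθ, sub_self]
      have hdisj : Disjoint (Icc θl θblack) (Ioc θblack θh) := by
        rw [Set.disjoint_left]
        intro x hx hx'
        exact absurd hx.2 (not_le.2 hx'.1)
      have hsplit : (∫ θ in Icc θl θh, W θ)
          = (∫ θ in Icc θl θblack, W θ) + ∫ θ in Ioc θblack θh, W θ := by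
        rw [← Icc_union_Ioc_eq_Icc hθblack.1 hθblack.2]
        exact setIntegral_union hdisj measurableSet_Ioc
          (hWint.mono_set (by rw [← Icc_union_Ioc_eq_Icc hθblack.1 hθblack.2]; exact subset_union_left))
          (hWint.mono_set (by rw [← Icc_union_Ioc_eq_Icc hθblack.1 hθblack.2]; exact subset_union_right))
      have hfirst : (∫ θ in Icc θl θblack, W θ) = 0 := by
        rw [setIntegral_congr_fun measurableSet_Icc hzero]
        simp
      rcases eq_or_lt_of_le hθblack.2 with hbh | hbh
      · -- θblack = θh : second piece is empty
        rw [hsplit, hfirst, hbh]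
        simp
      -- now θblack < θh
      set θb := θblack with hθbdef
      set gbd : ℝ → ℝ := antiExt θl θh gd with hgbd
      set gbi : ℝ → ℝ := antiExt θl θh gi with hgbi
      have hgbd_anti : Antitone gbd :=
        antiExt_antitone hθ (emissionFn_antitone ha hπ hπ0conc hadm)
      have hgbi_anti : Antitone gbi :=
        antiExt_antitone hθ (emissionFn_antitone ha hπ hπ0conc hadm_id)
      have hproj : ∀ t : ℝ, max θl (min t θh) ∈ Icc θl θh :=
        fun t => ⟨le_max_left _ _, max_le hθ (min_le_right _ _)⟩
      have hgbd_mem : ∀ t : ℝ, gbd t ∈ Icc 0 ebar := by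
        intro t
        exact BCset_subset ebar d
          (emissionFn_mem (hconc _) hadm (hproj t)).1
      have hgbi_mem : ∀ t : ℝ, gbi t ∈ Icc 0 ebar := by
        intro t
        exact BCset_subset ebar _
          (emissionFn_mem (hconc _) hadm_id (hproj t)).1
      set H : ℝ → ℝ := fun t => (∫ s in θb..t, gbd s) - ∫ s in θb..t, gbi s with hHdef
      -- key : H ≥ 0 on [θb, θh] via the envelope theorem
      have hprim : ∀ (d' : ℝ → ℝ), Admissible ebar θl θh π d' →
          ∀ t ∈ Icc θb θh,
          profitFn ebar π d' t - profitFn ebar π d' θb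
            = -(a * (∫ s in θb..t, antiExt θl θh (emissionFn ebar π d') s)
                + b * (t - θb)) := by
        intro d' hadm' t ht
        apply primitive_eq hθblack.1 hθblack.2 ht ha
          (antiExt_antitone hθ (emissionFn_antitone ha hπ hπ0conc hadm'))
        intro x y hx hy
        rw [antiExt_eqOn _ hx]
        exact profitFn_subgradient hπ hπ0conc hadm' hx hy
      have hpEqb : profitFn ebar π d θb = profitFn ebar π (fun e => e) θb := by
        rw [(emissionFn_eq_ebar hebar.le (hstrict θb ⟨hθblack.1, le_rfl⟩)).2,
          (emissionFn_eq_ebar hebar.le (hstrict θb ⟨hθblack.1, le_rfl⟩)).2]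
      have hH0 : ∀ t ∈ Icc θb θh, 0 ≤ H t := by
        intro t ht
        have h1 : profitFn ebar π d t - profitFn ebar π d θb
            = -(a * (∫ s in θb..t, gbd s) + b * (t - θb)) := hprim d hadm t ht
        have h2 : profitFn ebar π (fun e => e) t - profitFn ebar π (fun e => e) θb
            = -(a * (∫ s in θb..t, gbi s) + b * (t - θb)) := hprim _ hadm_id t ht
        have h3 : profitFn ebar π d t ≤ profitFn ebar π (fun e => e) t :=
          profitFn_le_id hπ hECont (hconc t) hadm ⟨hθblack.1.trans ht.1, ht.2⟩
        have h5 : 0 ≤ a * (∫ s in θb..t, gbd s) - a * (∫ s in θb..t, gbi s) := by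
          linarith [h1, h2, hpEqb, h3]
        have h6 : 0 ≤ a * H t := by
          simp only [hHdef]
          rw [mul_sub]
          exact h5
        nlinarith [h6, ha]
      -- integrability of the difference against f
      have hGint : IntegrableOn (fun t => (gbd t - gbi t) * f t) (Icc θl θh) := by
        apply hWint.congr_fun _ measurableSet_Icc
        intro t htmem
        simp only [hWdef, hgbd, hgbi, antiExt_eqOn _ htmem]
        ring
      -- the approximating sequence
      set w := θh - θb with hwdef
      have hw : 0 < w := by simp only [hwdef]; linarith
      set u : ℕ → ℝ := fun n => θb + w / (n + 3) with hudef
      set v : ℕ → ℝ := fun n => θh - w / (n + 3) with hvdef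
      have hfrac_pos : ∀ n : ℕ, 0 < w / ((n:ℝ) + 3) := by
        intro n; positivity
      have hfrac_le : ∀ n : ℕ, w / ((n:ℝ) + 3) ≤ w / 3 := by
        intro n
        apply div_le_div_of_nonneg_left hw.le (by norm_num)
        have := Nat.cast_nonneg (α := ℝ) n
        linarith
      have hun_gt : ∀ n, θb < u n := fun n => by
        simp only [hudef]; linarith [hfrac_pos n]
      have huv : ∀ n, u n ≤ v n := by
        intro n
        simp only [hudef, hvdef]
        have h1 : w / ((n:ℝ) + 3) ≤ w / 3 := hfrac_le n
        have : w / 3 + w / 3 ≤ w := by linarith [hw]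
        linarith
      have hvn_lt : ∀ n, v n < θh := fun n => by
        simp only [hvdef]; linarith [hfrac_pos n]
      have hun_lt_h : ∀ n, u n < θh := fun n => lt_of_le_of_lt (huv n) (hvn_lt n)
      have hun_mem : ∀ n, u n ∈ Icc θb θh := fun n => ⟨(hun_gt n).le, (hun_lt_h n).le⟩
      have hun_memΘ : ∀ n, u n ∈ Icc θl θh := fun n =>
        ⟨hθblack.1.trans (hun_gt n).le, (hun_lt_h n).le⟩
      -- set sequence
      set S : ℕ → Set ℝ := fun n => Ioc (u n) (v n) with hSdef
      have hSmeas : ∀ n, MeasurableSet (S n) := fun n => measurableSet_Ioc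
      have hSmono : Monotone S := by
        intro m n hmn
        apply Ioc_subset_Ioc
        · have h0 : ((m:ℝ)) ≤ (n:ℝ) := Nat.cast_le.2 hmn
          have : w / ((n:ℝ) + 3) ≤ w / ((m:ℝ) + 3) :=
            div_le_div_of_nonneg_left hw.le (by positivity) (by linarith)
          simp only [hudef]
          linarith
        · have h0 : ((m:ℝ)) ≤ (n:ℝ) := Nat.cast_le.2 hmn
          have : w / ((n:ℝ) + 3) ≤ w / ((m:ℝ) + 3) :=
            div_le_div_of_nonneg_left hw.le (by positivity) (by linarith)
          simp only [hvdef]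
          linarith
      have hSunion : (⋃ n, S n) = Ioo θb θh := by
        apply Subset.antisymm
        · apply iUnion_subset
          intro n t ht
          exact ⟨lt_of_lt_of_le (hun_gt n) ht.1.le, lt_of_le_of_lt ht.2 (hvn_lt n)⟩
        · intro t ht
          obtain ⟨n, hn⟩ := exists_nat_gt (max (w / (t - θb)) (w / (θh - t)))
          refine mem_iUnion.2 ⟨n, ?_, ?_⟩
          · -- u n < t
            have h1 : w / (t - θb) < (n:ℝ) + 3 :=
              lt_of_le_of_lt (le_max_left _ _) (by linarith [hn])
            have h2 : 0 < t - θb := by linarith [ht.1]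
            rw [div_lt_iff₀ h2] at h1
            simp only [hudef]
            have h3 : w / ((n:ℝ) + 3) < t - θb := by
              rw [div_lt_iff₀ (by positivity)]
              linarith [h1]
            linarith
          · -- t ≤ v n
            have h1 : w / (θh - t) < (n:ℝ) + 3 :=
              lt_of_le_of_lt (le_max_right _ _) (by linarith [hn])
            have h2 : 0 < θh - t := by linarith [ht.2]
            rw [div_lt_iff₀ h2] at h1
            simp only [hvdef]
            have h3 : w / ((n:ℝ) + 3) < θh - t := by
              rw [div_lt_iff₀ (by positivity)]
              linarith [h1]
            linarith
      -- convergence of integrals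
      have hWIoo : IntegrableOn W (Ioo θb θh) :=
        hWint.mono_set (fun t ht => ⟨hθblack.1.trans ht.1.le, ht.2.le⟩)
      have htendsto : Tendsto (fun n => ∫ t in S n, W t) atTop
          (𝓝 (∫ t in Ioo θb θh, W t)) := by
        have := tendsto_setIntegral_of_monotone hSmeas hSmono (by rwa [hSunion])
        rwa [hSunion] at this
      -- per-n lower bound via integration by parts
      have hbound : ∀ n, -(H (u n) * f (u n)) ≤ ∫ t in S n, W t := by
        intro n
        have hconv : (∫ t in S n, W t) = ∫ t in (u n)..(v n), (gbd t - gbi t) * f t := by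
          rw [intervalIntegral.integral_of_le (huv n)]
          apply setIntegral_congr_fun measurableSet_Ioc
          intro t htmem
          have htΘ : t ∈ Icc θl θh :=
            ⟨hθblack.1.trans ((hun_gt n).trans htmem.1).le, htmem.2.trans (hvn_lt n).le⟩
          simp only [hWdef, hgbd, hgbi, antiExt_eqOn _ htΘ]
          ring
        rw [hconv]
        exact ibp_key hgbd_anti hgbi_anti hθblack.1 (hun_gt n) (huv n) (hvn_lt n)
          hH0 hfC1 hmono hf0 hGint
      -- the lower bounds tend to zero
      have hHub : ∀ n, H (u n) ≤ ebar * (u n - θb) := by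
        intro n
        have h1 : (∫ s in θb..(u n), gbd s) ≤ ∫ s in θb..(u n), (fun _ => ebar) s := by
          apply intervalIntegral.integral_mono_on (hun_gt n).le
            (hgbd_anti.intervalIntegrable (a := θb) (b := u n))
            (_root_.intervalIntegrable_const)
          exact fun s _ => (hgbd_mem s).2
        have h2 : (∫ s in θb..(u n), (fun _ => (0:ℝ)) s) ≤ ∫ s in θb..(u n), gbi s := by
          apply intervalIntegral.integral_mono_on (hun_gt n).le
            (_root_.intervalIntegrable_const)
            (hgbi_anti.intervalIntegrable (a := θb) (b := u n))
          exact fun s _ => (hgbi_mem s).1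
        rw [intervalIntegral.integral_const, smul_eq_mul] at h1
        rw [intervalIntegral.integral_const, smul_eq_mul] at h2
        simp only [hHdef]
        simp only [mul_zero] at h2
        nlinarith [h1, h2]
      have hfub : ∀ n, f (u n) ≤ f θb :=
        fun n => hmono ⟨le_rfl, hθblack.2⟩ (hun_mem n) (hun_gt n).le
      have hf0un : ∀ n, 0 ≤ f (u n) := fun n => hf0 _ (hun_memΘ n)
      have hprod_nonneg : ∀ n, 0 ≤ H (u n) * f (u n) :=
        fun n => mul_nonneg (hH0 _ (hun_mem n)) (hf0un n)
      have hprod_ub : ∀ n, H (u n) * f (u n) ≤ (ebar * f θb) * (w / ((n:ℝ) + 3)) := by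
        intro n
        have heq : u n - θb = w / ((n:ℝ) + 3) := by simp only [hudef]; ring
        have h1 : H (u n) ≤ ebar * (w / ((n:ℝ) + 3)) := by
          rw [← heq]; exact hHub n
        calc H (u n) * f (u n) ≤ (ebar * (w / ((n:ℝ) + 3))) * f (u n) := by
              apply mul_le_mul_of_nonneg_right h1 (hf0un n)
          _ ≤ (ebar * (w / ((n:ℝ) + 3))) * f θb := by
              exact mul_le_mul_of_nonneg_left (hfub n)
                (mul_nonneg hebar.le (hfrac_pos n).le)
          _ = (ebar * f θb) * (w / ((n:ℝ) + 3)) := by ring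
      have hfrac_tendsto : Tendsto (fun n : ℕ => (ebar * f θb) * (w / ((n:ℝ) + 3)))
          atTop (𝓝 0) := by
        have hden : Tendsto (fun n : ℕ => ((n:ℝ) + 3)) atTop atTop :=
          tendsto_atTop_add_const_right _ 3 tendsto_natCast_atTop_atTop
        have h2 : Tendsto (fun n : ℕ => w / ((n:ℝ) + 3)) atTop (𝓝 0) :=
          Tendsto.div_atTop tendsto_const_nhds hden
        simpa using h2.const_mul (ebar * f θb)
      have hzero_tendsto : Tendsto (fun n => H (u n) * f (u n)) atTop (𝓝 0) :=
        squeeze_zero hprod_nonneg hprod_ub hfrac_tendsto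
      have hneg_tendsto : Tendsto (fun n => -(H (u n) * f (u n))) atTop (𝓝 0) := by
        have := hzero_tendsto.neg
        simpa using this
      have hIoo_nonneg : 0 ≤ ∫ t in Ioo θb θh, W t :=
        le_of_tendsto_of_tendsto' hneg_tendsto htendsto hbound
      have hIocIoo : (∫ t in Ioc θb θh, W t) = ∫ t in Ioo θb θh, W t :=
        MeasureTheory.integral_Ioc_eq_integral_Ioo
      rw [hsplit, hfirst, hIocIoo]
      linarith [hIoo_nonneg]
  refine ⟨main, ?_⟩
  intro d hadm heff
  obtain ⟨h1, h2⟩ := main d hadm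
  by_contra hcon
  rw [not_and_or] at hcon
  apply heff
  refine ⟨(fun e => e), hadm_id, h1, h2, ?_⟩
  rcases hcon with h | h
  · exact Or.inl (lt_of_le_of_ne h1 h)
  · exact Or.inr (lt_of_le_of_ne h2 (fun hh => h hh.symm))
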